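/- Let a, b, c, d lie in positive order on the unit circle with ab ≠ cd, ad ≠ bc and ac ≠ bd. Set w1 := (ab(c+d) − cd(a+b))/(ab − cd), w3 := (ad(b+c) − bc(a+d))/(ad − bc), w2 := (ac(b+d) − bd(a+c))/(ac − bd), and assume |w2| < 1. Let t1, t3 ∈ ℂ with |t1| < 1, |t3| < 1 be collinear with w3, w2 and lying on the lines through a,b and through c,d respectively, and let t2, t4 ∈ ℂ with |t2| < 1, |t4| < 1 be collinear with w1, w2 and lying on the lines through b,c and through a,d respectively (collinearity over ℝ, viewing ℂ as the real plane). Then ρ(w2,t1) = ρ(w2,t3) and ρ(w2,t2) = ρ(w2,t4). -/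

import Mathlib

open Complex

/-- Points `a, b, c, d` lie in positive order on the unit circle. -/
def PosOrderOnCircle (a b c d : ℂ) : Prop :=
  ∃ θ₁ θ₂ θ₃ θ₄ : ℝ, θ₁ < θ₂ ∧ θ₂ < θ₃ ∧ θ₃ < θ₄ ∧ θ₄ < θ₁ + 2 * Real.pi ∧
    a = Complex.exp (θ₁ * Complex.I) ∧ b = Complex.exp (θ₂ * Complex.I) ∧
    c = Complex.exp (θ₃ * Complex.I) ∧ d = Complex.exp (θ₄ * Complex.I)

/-- The hyperbolic distance in the unit disk. -/
noncomputable def hypDist (x y : ℂ) : ℝ :=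
  2 * Real.arsinh (‖x - y‖ /
    Real.sqrt ((1 - ‖x‖ ^ 2) * (1 - ‖y‖ ^ 2)))


private lemma exp_ne_exp {x y : ℝ} (h0 : x < y) (h2 : y < x + 2 * Real.pi) :
    Complex.exp (x * I) ≠ Complex.exp (y * I) := by
  intro h
  have h1 : Complex.exp ((y : ℂ) * I - (x : ℂ) * I) = 1 := by
    rw [Complex.exp_sub, ← h, div_self (Complex.exp_ne_zero _)]
  rw [Complex.exp_eq_one_iff] at h1
  obtain ⟨n, hn⟩ := h1
  have hI : ((y : ℂ) - x) * I = ((n : ℂ) * (2 * Real.pi)) * I := by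
    rw [show ((n:ℂ) * (2 * Real.pi)) * I = (n:ℂ) * (2 * Real.pi * I) by ring, ← hn]; ring
  have h3 : ((y : ℂ) - x) = (n : ℂ) * (2 * Real.pi) :=
    mul_right_cancel₀ Complex.I_ne_zero hI
  have h4 : (y - x : ℝ) = (n : ℝ) * (2 * Real.pi) := by exact_mod_cast h3
  have hpi := Real.pi_pos
  have hn0 : (0 : ℤ) < n := by exact_mod_cast show (0:ℝ) < (n:ℝ) by nlinarith
  have : (1 : ℝ) ≤ (n : ℝ) := by exact_mod_cast hn0
  nlinarith


private lemma exp_sub_exp (x y : ℝ) :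
    Complex.exp (x * I) - Complex.exp (y * I) =
      Complex.exp (((x + y) / 2 : ℝ) * I) *
        (2 * I * ((Real.sin ((x - y) / 2) : ℝ) : ℂ)) := by
  rw [Complex.ofReal_sin, Complex.sin]
  have h1 : Complex.exp (((x + y) / 2 : ℝ) * I) * Complex.exp ((((x - y) / 2 : ℝ) : ℂ) * I)
      = Complex.exp (x * I) := by
    rw [← Complex.exp_add]; congr 1; push_cast; ring
  have h2 : Complex.exp (((x + y) / 2 : ℝ) * I) * Complex.exp (-(((x - y) / 2 : ℝ) : ℂ) * I)
      = Complex.exp (y * I) := by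
    rw [← Complex.exp_add]; congr 1; push_cast; ring
  linear_combination -h1 + h2 +
    (Complex.exp (((x + y) / 2 : ℝ) * I) * Complex.exp ((((x - y) / 2 : ℝ) : ℂ) * I)
     - Complex.exp (((x + y) / 2 : ℝ) * I) * Complex.exp (-(((x - y) / 2 : ℝ) : ℂ) * I)) *
      Complex.I_sq

private lemma term_eq (p x u v : ℝ) :
    Complex.exp (p * I) * (Complex.exp (x * I) - Complex.exp (u * I)) *
      (Complex.exp (x * I) - Complex.exp (v * I)) =
    -4 * Complex.exp ((p + x + (u + v) / 2 : ℝ) * I) *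
      ((Real.sin ((x - u) / 2) * Real.sin ((x - v) / 2) : ℝ) : ℂ) := by
  rw [exp_sub_exp x u, exp_sub_exp x v]
  have hE : Complex.exp (p * I) * Complex.exp (((x + u) / 2 : ℝ) * I) *
      Complex.exp (((x + v) / 2 : ℝ) * I) = Complex.exp ((p + x + (u + v) / 2 : ℝ) * I) := by
    rw [← Complex.exp_add, ← Complex.exp_add]; congr 1; push_cast; ring
  push_cast at hE ⊢
  linear_combination (4 * Complex.sin (((x : ℂ) - u) / 2) * Complex.sin (((x : ℂ) - v) / 2)) *
      (Complex.exp (((p : ℂ) + x + (u + v) / 2) * I)) * Complex.I_sq +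
    (2 * I * Complex.sin (((x : ℂ) - u) / 2)) * (2 * I * Complex.sin (((x : ℂ) - v) / 2)) * hE

private lemma N_ne_zero {x y u v : ℝ}
    (h : Real.sin ((y - u) / 2) * Real.sin ((y - v) / 2)
        + Real.sin ((x - u) / 2) * Real.sin ((x - v) / 2) ≠ 0) :
    Complex.exp (x * I) * (Complex.exp (y * I) - Complex.exp (u * I)) *
        (Complex.exp (y * I) - Complex.exp (v * I))
      + Complex.exp (y * I) * (Complex.exp (x * I) - Complex.exp (u * I)) *
        (Complex.exp (x * I) - Complex.exp (v * I)) ≠ 0 := by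
  rw [term_eq x y u v, term_eq y x u v,
    show (y + x + (u + v) / 2 : ℝ) = (x + y + (u + v) / 2 : ℝ) by ring]
  intro hc
  apply h
  have h' : Complex.exp ((x + y + (u + v) / 2 : ℝ) * I) *
      ((Real.sin ((y - u) / 2) * Real.sin ((y - v) / 2)
        + Real.sin ((x - u) / 2) * Real.sin ((x - v) / 2) : ℝ) : ℂ) = 0 := by
    push_cast at hc ⊢
    linear_combination (-1/4 : ℂ) * hc
  rcases mul_eq_zero.mp h' with h0 | h0
  · exact absurd h0 (Complex.exp_ne_zero _)
  · exact_mod_cast h0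

private lemma hypDist_congr {w t s : ℂ} (hw : ‖w‖ < 1) (ht : ‖t‖ < 1)
    (hs : ‖s‖ < 1)
    (h : Complex.normSq (w - t) * (1 - Complex.normSq s) =
         Complex.normSq (w - s) * (1 - Complex.normSq t)) :
    hypDist w t = hypDist w s := by
  have h' : ‖w - t‖ ^ 2 * (1 - ‖s‖ ^ 2) =
      ‖w - s‖ ^ 2 * (1 - ‖t‖ ^ 2) := by
    simp only [Complex.sq_norm]; exact h
  unfold hypDist
  have hw2 : 0 < 1 - ‖w‖ ^ 2 := by nlinarith [norm_nonneg w]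
  have ht2 : 0 < 1 - ‖t‖ ^ 2 := by nlinarith [norm_nonneg t]
  have hs2 : 0 < 1 - ‖s‖ ^ 2 := by nlinarith [norm_nonneg s]
  have e1 : ‖w - t‖ / Real.sqrt ((1 - ‖w‖ ^ 2) * (1 - ‖t‖ ^ 2))
      = Real.sqrt (‖w - t‖ ^ 2 / ((1 - ‖w‖ ^ 2) * (1 - ‖t‖ ^ 2))) := by
    rw [Real.sqrt_div (by positivity), Real.sqrt_sq (norm_nonneg _)]
  have e2 : ‖w - s‖ / Real.sqrt ((1 - ‖w‖ ^ 2) * (1 - ‖s‖ ^ 2))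
      = Real.sqrt (‖w - s‖ ^ 2 / ((1 - ‖w‖ ^ 2) * (1 - ‖s‖ ^ 2))) := by
    rw [Real.sqrt_div (by positivity), Real.sqrt_sq (norm_nonneg _)]
  rw [e1, e2]
  congr 3
  rw [div_eq_div_iff (by positivity) (by positivity)]
  linear_combination (1 - ‖w‖ ^ 2) * h'

private lemma collinear_param {p q r : ℂ} (hpq : p ≠ q)
    (h : Collinear ℝ ({p, q, r} : Set ℂ)) : ∃ t : ℝ, r = p + (t : ℂ) * (q - p) := by
  rw [collinear_iff_exists_forall_eq_smul_vadd] at h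
  obtain ⟨p₀, v, hv⟩ := h
  obtain ⟨rp, hp⟩ := hv p (by simp)
  obtain ⟨rq, hq⟩ := hv q (by simp)
  obtain ⟨rr, hr⟩ := hv r (by simp)
  have hne : rq - rp ≠ 0 := by
    intro h0
    apply hpq
    have : rq = rp := by linarith [sub_eq_zero.mp h0]
    rw [hp, hq, this]
  refine ⟨(rr - rp) / (rq - rp), ?_⟩
  have hqp : q - p = ((rq - rp : ℝ) : ℂ) * v := by
    rw [hp, hq]; simp only [vadd_eq_add, Complex.real_smul]; push_cast; ring
  have hrp : r - p = ((rr - rp : ℝ) : ℂ) * v := by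
    rw [hp, hr]; simp only [vadd_eq_add, Complex.real_smul]; push_cast; ring
  have hr' : r = p + ((rr - rp : ℝ) : ℂ) * v := by rw [← hrp]; ring
  rw [hr', hqp]
  have hnec : ((rq : ℂ) - rp) ≠ 0 := by
    simpa using (Complex.ofReal_ne_zero.mpr hne)
  push_cast
  field_simp

section core
variable {x y z u t s : ℂ}

set_option maxHeartbeats 4000000 in
private lemma core (hcx : starRingEnd ℂ x = x⁻¹) (hcy : starRingEnd ℂ y = y⁻¹)
    (hcz : starRingEnd ℂ z = z⁻¹) (hcu : starRingEnd ℂ u = u⁻¹)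
    (hx0 : x ≠ 0) (hy0 : y ≠ 0) (hz0 : z ≠ 0) (hu0 : u ≠ 0)
    (hxy : x ≠ y) (hzu : z ≠ u)
    (hA : x * y - z * u ≠ 0) (hB : x * u - y * z ≠ 0) (hC : x * z - y * u ≠ 0)
    (hDt : (x + y) * (x * y + z * u) - 2 * (x * y) * (z + u) ≠ 0)
    (hDs : (z + u) * (z * u + x * y) - 2 * (z * u) * (x + y) ≠ 0)
    (hVw : (x * u * (y + z) - y * z * (x + u)) / (x * u - y * z) ≠
           (x * z * (y + u) - y * u * (x + z)) / (x * z - y * u))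
    (hwlt : ‖(x * z * (y + u) - y * u * (x + z)) / (x * z - y * u)‖ < 1)
    (htlt : ‖t‖ < 1) (hslt : ‖s‖ < 1)
    (hcolt : Collinear ℝ ({(x * u * (y + z) - y * z * (x + u)) / (x * u - y * z),
        (x * z * (y + u) - y * u * (x + z)) / (x * z - y * u), t} : Set ℂ))
    (hcht : Collinear ℝ ({x, y, t} : Set ℂ))
    (hcols : Collinear ℝ ({(x * u * (y + z) - y * z * (x + u)) / (x * u - y * z),
        (x * z * (y + u) - y * u * (x + z)) / (x * z - y * u), s} : Set ℂ))
    (hchs : Collinear ℝ ({z, u, s} : Set ℂ)) :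
    hypDist ((x * z * (y + u) - y * u * (x + z)) / (x * z - y * u)) t =
    hypDist ((x * z * (y + u) - y * u * (x + z)) / (x * z - y * u)) s := by
  -- conjugates of the diagonal points
  have hcV : starRingEnd ℂ ((x * u * (y + z) - y * z * (x + u)) / (x * u - y * z)) =
      (x + u - y - z) / (x * u - y * z) := by
    rw [map_div₀, map_sub, map_sub, map_mul, map_mul, map_mul, map_mul, map_add, map_add,
      hcx, hcy, hcz, hcu]
    rw [div_eq_div_iff (by field_simp; intro h; apply hB; rcases div_eq_zero_iff.mp h with h | h <;> [linear_combination -h; simp [hx0, hy0, hz0, hu0] at h]) hB]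
    field_simp
    ring

  -- conjugate of the second diagonal point
  have hcw : starRingEnd ℂ ((x * z * (y + u) - y * u * (x + z)) / (x * z - y * u)) =
      (x + z - y - u) / (x * z - y * u) := by
    rw [map_div₀, map_sub, map_sub, map_mul, map_mul, map_mul, map_mul, map_add, map_add,
      hcx, hcy, hcz, hcu]
    rw [div_eq_div_iff (by field_simp; intro h; apply hC; rcases div_eq_zero_iff.mp h with h | h <;> [linear_combination -h; simp [hx0, hy0, hz0, hu0] at h]) hC]
    field_simp
    ring
  -- polar relations: V and w lie on the polar line of the point Q/R
  have hpV : (x * u * (y + z) - y * z * (x + u)) / (x * u - y * z) * (x + y - z - u) +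
      (x + u - y - z) / (x * u - y * z) * (x * y * (z + u) - z * u * (x + y)) =
      2 * (x * y - z * u) := by
    field_simp
    ring
  have hpw : (x * z * (y + u) - y * u * (x + z)) / (x * z - y * u) * (x + y - z - u) +
      (x + z - y - u) / (x * z - y * u) * (x * y * (z + u) - z * u * (x + y)) =
      2 * (x * y - z * u) := by
    field_simp
    ring
  -- parametrize t on the line through V and w and get its polar equation
  have hpolar : ∀ p : ℂ, Collinear ℝ ({(x * u * (y + z) - y * z * (x + u)) / (x * u - y * z),
      (x * z * (y + u) - y * u * (x + z)) / (x * z - y * u), p} : Set ℂ) →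
      p * (x + y - z - u) + (starRingEnd ℂ p) * (x * y * (z + u) - z * u * (x + y)) =
      2 * (x * y - z * u) := by
    intro p hcol
    obtain ⟨r, hr⟩ := collinear_param hVw hcol
    have hcp : starRingEnd ℂ p = (x + u - y - z) / (x * u - y * z) +
        (r : ℂ) * ((x + z - y - u) / (x * z - y * u) - (x + u - y - z) / (x * u - y * z)) := by
      rw [hr, map_add, map_mul, map_sub, hcV, hcw, Complex.conj_ofReal]
    rw [hcp, hr]
    linear_combination (1 - (r : ℂ)) * hpV + (r : ℂ) * hpw
  have hpt := hpolar t hcolt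
  have hps := hpolar s hcols
  -- chord equations
  have hchordt : t + x * y * (starRingEnd ℂ t) = x + y := by
    obtain ⟨m, hm⟩ := collinear_param hxy hcht
    have hcm : starRingEnd ℂ t = x⁻¹ + (m : ℂ) * (y⁻¹ - x⁻¹) := by
      rw [hm, map_add, map_mul, map_sub, hcx, hcy, Complex.conj_ofReal]
    rw [hcm, hm]
    field_simp
    ring
  have hchords : s + z * u * (starRingEnd ℂ s) = z + u := by
    obtain ⟨m, hm⟩ := collinear_param hzu hchs
    have hcm : starRingEnd ℂ s = z⁻¹ + (m : ℂ) * (u⁻¹ - z⁻¹) := by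
      rw [hm, map_add, map_mul, map_sub, hcz, hcu, Complex.conj_ofReal]
    rw [hcm, hm]
    field_simp
    ring
  -- solve for t, s and their conjugates
  have hDs' : 2 * (z * u) * (x + y) - (z + u) * (z * u + x * y) ≠ 0 := by
    intro h; apply hDs; linear_combination -h
  have htv : t = (2 * (x * y) * (x * y - z * u) - (x * y * (z + u) - z * u * (x + y)) * (x + y)) /
      ((x + y) * (x * y + z * u) - 2 * (x * y) * (z + u)) := by
    rw [eq_div_iff hDt]
    linear_combination x * y * hpt - (x * y * (z + u) - z * u * (x + y)) * hchordt
  have hctv : starRingEnd ℂ t = ((x + y) * ((x + y) * (x * y + z * u) - 2 * (x * y) * (z + u)) -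
      (2 * (x * y) * (x * y - z * u) - (x * y * (z + u) - z * u * (x + y)) * (x + y))) /
      (x * y * ((x + y) * (x * y + z * u) - 2 * (x * y) * (z + u))) := by
    rw [eq_div_iff (mul_ne_zero (mul_ne_zero hx0 hy0) hDt)]
    linear_combination ((x + y) * (x * y + z * u) - 2 * (x * y) * (z + u)) * hchordt
      - x * y * hpt + (x * y * (z + u) - z * u * (x + y)) * hchordt
  have hsv : s = (2 * (z * u) * (x * y - z * u) - (x * y * (z + u) - z * u * (x + y)) * (z + u)) /
      (2 * (z * u) * (x + y) - (z + u) * (z * u + x * y)) := by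
    rw [eq_div_iff hDs']
    linear_combination z * u * hps - (x * y * (z + u) - z * u * (x + y)) * hchords
  have hcsv : starRingEnd ℂ s = ((z + u) * (2 * (z * u) * (x + y) - (z + u) * (z * u + x * y)) -
      (2 * (z * u) * (x * y - z * u) - (x * y * (z + u) - z * u * (x + y)) * (z + u))) /
      (z * u * (2 * (z * u) * (x + y) - (z + u) * (z * u + x * y))) := by
    rw [eq_div_iff (mul_ne_zero (mul_ne_zero hz0 hu0) hDs')]
    linear_combination (2 * (z * u) * (x + y) - (z + u) * (z * u + x * y)) * hchords
      - z * u * hps + (x * y * (z + u) - z * u * (x + y)) * hchords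
  -- the final algebraic identity
  set W : ℂ := (x * z * (y + u) - y * u * (x + z)) / (x * z - y * u) with hWdef
  have CG : (W - t) * starRingEnd ℂ (W - t) * (1 - s * starRingEnd ℂ s) =
      (W - s) * starRingEnd ℂ (W - s) * (1 - t * starRingEnd ℂ t) := by
    rw [map_sub, map_sub, hWdef, hcw, hctv, hcsv, htv, hsv]
    have hDt2 : (x + y) * (x * y + z * u) - x * y * 2 * (z + u) ≠ 0 := by
      intro h; apply hDt; linear_combination h
    have hDs2 : z * u * 2 * (x + y) - (z + u) * (z * u + x * y) ≠ 0 := by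
      intro h; apply hDs'; linear_combination h
    field_simp
    ring
  simp only [Complex.mul_conj] at CG
  have keyR : Complex.normSq (W - t) * (1 - Complex.normSq s) =
      Complex.normSq (W - s) * (1 - Complex.normSq t) := by exact_mod_cast CG
  exact hypDist_congr hwlt htlt hslt keyR

end core

set_option maxHeartbeats 2000000 in
/-- The point `w2` is hyperbolically equidistant from `t1` and `t3`, and from `t2`
and `t4`, where `t1 = L[w3,w2] ∩ L[a,b]`, `t2 = L[w1,w2] ∩ L[b,c]`,
`t3 = L[w3,w2] ∩ L[c,d]`, `t4 = L[w1,w2] ∩ L[a,d]`. -/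
theorem w2_hyperbolically_equidistant (a b c d t1 t2 t3 t4 : ℂ)
    (hord : PosOrderOnCircle a b c d)
    (h1 : a * b ≠ c * d) (h3 : a * d ≠ b * c) (h2 : a * c ≠ b * d)
    (hw2lt : ‖(a * c * (b + d) - b * d * (a + c)) / (a * c - b * d)‖ < 1) :
    let w1 := (a * b * (c + d) - c * d * (a + b)) / (a * b - c * d)
    let w3 := (a * d * (b + c) - b * c * (a + d)) / (a * d - b * c)
    let w2 := (a * c * (b + d) - b * d * (a + c)) / (a * c - b * d)
    ‖t1‖ < 1 → Collinear ℝ ({w3, w2, t1} : Set ℂ) →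
      Collinear ℝ ({a, b, t1} : Set ℂ) →
    ‖t2‖ < 1 → Collinear ℝ ({w1, w2, t2} : Set ℂ) →
      Collinear ℝ ({b, c, t2} : Set ℂ) →
    ‖t3‖ < 1 → Collinear ℝ ({w3, w2, t3} : Set ℂ) →
      Collinear ℝ ({c, d, t3} : Set ℂ) →
    ‖t4‖ < 1 → Collinear ℝ ({w1, w2, t4} : Set ℂ) →
      Collinear ℝ ({a, d, t4} : Set ℂ) →
    hypDist w2 t1 = hypDist w2 t3 ∧ hypDist w2 t2 = hypDist w2 t4 := by
  obtain ⟨θ₁, θ₂, θ₃, θ₄, h12, h23, h34, h41, hea, heb, hec, hed⟩ := hord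
  intro w1 w3 w2 ht1lt hk1 hk1' ht2lt hk2 hk2' ht3lt hk3 hk3' ht4lt hk4 hk4'
  have hw1d : w1 = (a * b * (c + d) - c * d * (a + b)) / (a * b - c * d) := rfl
  have hw3d : w3 = (a * d * (b + c) - b * c * (a + d)) / (a * d - b * c) := rfl
  have hw2d : w2 = (a * c * (b + d) - b * d * (a + c)) / (a * c - b * d) := rfl
  rw [hw3d, hw2d] at hk1 hk3
  rw [hw1d, hw2d] at hk2 hk4
  rw [hw2d]
  have hpi := Real.pi_pos
  have ha0 : a ≠ 0 := by rw [hea]; exact Complex.exp_ne_zero _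
  have hb0 : b ≠ 0 := by rw [heb]; exact Complex.exp_ne_zero _
  have hc0 : c ≠ 0 := by rw [hec]; exact Complex.exp_ne_zero _
  have hd0 : d ≠ 0 := by rw [hed]; exact Complex.exp_ne_zero _
  have hcja : starRingEnd ℂ a = a⁻¹ := by
    rw [hea, ← Complex.exp_conj, ← Complex.exp_neg]
    congr 1
    simp [map_mul, Complex.conj_ofReal, Complex.conj_I]
  have hcjb : starRingEnd ℂ b = b⁻¹ := by
    rw [heb, ← Complex.exp_conj, ← Complex.exp_neg]
    congr 1
    simp [map_mul, Complex.conj_ofReal, Complex.conj_I]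
  have hcjc : starRingEnd ℂ c = c⁻¹ := by
    rw [hec, ← Complex.exp_conj, ← Complex.exp_neg]
    congr 1
    simp [map_mul, Complex.conj_ofReal, Complex.conj_I]
  have hcjd : starRingEnd ℂ d = d⁻¹ := by
    rw [hed, ← Complex.exp_conj, ← Complex.exp_neg]
    congr 1
    simp [map_mul, Complex.conj_ofReal, Complex.conj_I]
  have hab : a ≠ b := by rw [hea, heb]; exact exp_ne_exp h12 (by linarith)
  have hbc : b ≠ c := by rw [heb, hec]; exact exp_ne_exp h23 (by linarith)
  have hcd : c ≠ d := by rw [hec, hed]; exact exp_ne_exp h34 (by linarith)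
  have had : a ≠ d := by rw [hea, hed]; exact exp_ne_exp (by linarith) (by linarith)
  have hA1 : a * b - c * d ≠ 0 := sub_ne_zero_of_ne h1
  have hB1 : a * d - b * c ≠ 0 := sub_ne_zero_of_ne h3
  have hC1 : a * c - b * d ≠ 0 := sub_ne_zero_of_ne h2
  -- the four denominators are nonzero
  have hD1 : (a + b) * (a * b + c * d) - 2 * (a * b) * (c + d) ≠ 0 := by
    have s1 : Real.sin ((θ₂ - θ₃) / 2) < 0 :=
      Real.sin_neg_of_neg_of_neg_pi_lt (by linarith) (by linarith)
    have s2 : Real.sin ((θ₂ - θ₄) / 2) < 0 :=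
      Real.sin_neg_of_neg_of_neg_pi_lt (by linarith) (by linarith)
    have s3 : Real.sin ((θ₁ - θ₃) / 2) < 0 :=
      Real.sin_neg_of_neg_of_neg_pi_lt (by linarith) (by linarith)
    have s4 : Real.sin ((θ₁ - θ₄) / 2) < 0 :=
      Real.sin_neg_of_neg_of_neg_pi_lt (by linarith) (by linarith)
    have hp1 := mul_pos_of_neg_of_neg s1 s2
    have hp2 := mul_pos_of_neg_of_neg s3 s4
    have hN := N_ne_zero (x := θ₁) (y := θ₂) (u := θ₃) (v := θ₄)
      (by nlinarith : (0:ℝ) < _).ne'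
    intro h0
    apply hN
    rw [hea, heb, hec, hed] at h0
    linear_combination h0
  have hD3 : (c + d) * (c * d + a * b) - 2 * (c * d) * (a + b) ≠ 0 := by
    have s1 : 0 < Real.sin ((θ₄ - θ₁) / 2) :=
      Real.sin_pos_of_pos_of_lt_pi (by linarith) (by linarith)
    have s2 : 0 < Real.sin ((θ₄ - θ₂) / 2) :=
      Real.sin_pos_of_pos_of_lt_pi (by linarith) (by linarith)
    have s3 : 0 < Real.sin ((θ₃ - θ₁) / 2) :=
      Real.sin_pos_of_pos_of_lt_pi (by linarith) (by linarith)
    have s4 : 0 < Real.sin ((θ₃ - θ₂) / 2) :=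
      Real.sin_pos_of_pos_of_lt_pi (by linarith) (by linarith)
    have hp1 := mul_pos s1 s2
    have hp2 := mul_pos s3 s4
    have hN := N_ne_zero (x := θ₃) (y := θ₄) (u := θ₁) (v := θ₂)
      (by nlinarith : (0:ℝ) < _).ne'
    intro h0
    apply hN
    rw [hea, heb, hec, hed] at h0
    linear_combination h0
  have hD2 : (c + b) * (c * b + a * d) - 2 * (c * b) * (a + d) ≠ 0 := by
    have s1 : 0 < Real.sin ((θ₃ - θ₁) / 2) :=
      Real.sin_pos_of_pos_of_lt_pi (by linarith) (by linarith)
    have s2 : Real.sin ((θ₃ - θ₄) / 2) < 0 :=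
      Real.sin_neg_of_neg_of_neg_pi_lt (by linarith) (by linarith)
    have s3 : 0 < Real.sin ((θ₂ - θ₁) / 2) :=
      Real.sin_pos_of_pos_of_lt_pi (by linarith) (by linarith)
    have s4 : Real.sin ((θ₂ - θ₄) / 2) < 0 :=
      Real.sin_neg_of_neg_of_neg_pi_lt (by linarith) (by linarith)
    have hp1 := mul_neg_of_pos_of_neg s1 s2
    have hp2 := mul_neg_of_pos_of_neg s3 s4
    have hN := N_ne_zero (x := θ₂) (y := θ₃) (u := θ₁) (v := θ₄)
      (by nlinarith : _ < (0:ℝ)).ne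
    intro h0
    apply hN
    rw [hea, heb, hec, hed] at h0
    linear_combination h0
  have hD4 : (a + d) * (a * d + c * b) - 2 * (a * d) * (c + b) ≠ 0 := by
    have s1 : 0 < Real.sin ((θ₄ - θ₂) / 2) :=
      Real.sin_pos_of_pos_of_lt_pi (by linarith) (by linarith)
    have s2 : 0 < Real.sin ((θ₄ - θ₃) / 2) :=
      Real.sin_pos_of_pos_of_lt_pi (by linarith) (by linarith)
    have s3 : Real.sin ((θ₁ - θ₂) / 2) < 0 :=
      Real.sin_neg_of_neg_of_neg_pi_lt (by linarith) (by linarith)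
    have s4 : Real.sin ((θ₁ - θ₃) / 2) < 0 :=
      Real.sin_neg_of_neg_of_neg_pi_lt (by linarith) (by linarith)
    have hp1 := mul_pos s1 s2
    have hp2 := mul_pos_of_neg_of_neg s3 s4
    have hN := N_ne_zero (x := θ₁) (y := θ₄) (u := θ₂) (v := θ₃)
      (by nlinarith : (0:ℝ) < _).ne'
    intro h0
    apply hN
    rw [hea, heb, hec, hed] at h0
    linear_combination h0
  -- the numerators of w1 and w3 are nonzero
  have hw1n : a * b * (c + d) - c * d * (a + b) ≠ 0 := by
    intro h0
    have hcj : (starRingEnd ℂ) (a * b * (c + d) - c * d * (a + b)) = 0 := by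
      rw [h0, map_zero]
    simp only [map_sub, map_mul, map_add, hcja, hcjb, hcjc, hcjd] at hcj
    have hcj2 : c + d = a + b := by
      field_simp at hcj
      have h' : (a * b * c * d) * (c + d) = (a * b * c * d) * (a + b) := by
        linear_combination (a * b * c * d) * hcj
      exact mul_left_cancel₀ (by simp [ha0, hb0, hc0, hd0]) h' 
    have hsplit : (a + b) * (a * b - c * d) = 0 := by
      linear_combination h0 - a * b * hcj2
    rcases mul_eq_zero.mp hsplit with hz | hz
    · apply h3
      have hb' : b = -a := by linear_combination hz
      have hd' : d = -c := by linear_combination hcj2 + hz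
      rw [hb', hd']; ring
    · exact h1 (sub_eq_zero.mp hz)
  have hw3n : a * d * (b + c) - b * c * (a + d) ≠ 0 := by
    intro h0
    have hcj : (starRingEnd ℂ) (a * d * (b + c) - b * c * (a + d)) = 0 := by
      rw [h0, map_zero]
    simp only [map_sub, map_mul, map_add, hcja, hcjb, hcjc, hcjd] at hcj
    have hcj2 : b + c = a + d := by
      field_simp at hcj
      have h' : (a * b * c * d) * (b + c) = (a * b * c * d) * (a + d) := by
        linear_combination (a * b * c * d) * hcj
      exact mul_left_cancel₀ (by simp [ha0, hb0, hc0, hd0]) h' 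
    have hsplit : (a + d) * (a * d - b * c) = 0 := by
      linear_combination h0 - a * d * hcj2
    rcases mul_eq_zero.mp hsplit with hz | hz
    · apply h1
      have hd' : d = -a := by linear_combination hz
      have hc' : c = -b := by linear_combination hcj2 + hz
      rw [hd', hc']; ring
    · exact h3 (sub_eq_zero.mp hz)
  -- first application: chords ab and cd, polar of w1, distances from w2
  have hVw1 : (a * d * (b + c) - b * c * (a + d)) / (a * d - b * c) ≠
      (a * c * (b + d) - b * d * (a + c)) / (a * c - b * d) := by
    intro heq
    rw [div_eq_div_iff hB1 hC1] at heq
    have hz0 : (a - b) * ((c - d) * (a * b * (c + d) - c * d * (a + b))) = 0 := by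
      linear_combination -heq
    rcases mul_eq_zero.mp hz0 with hz | hz
    · exact hab (sub_eq_zero.mp hz)
    · rcases mul_eq_zero.mp hz with hz2 | hz2
      · exact hcd (sub_eq_zero.mp hz2)
      · exact hw1n hz2
  have case1 := core (x := a) (y := b) (z := c) (u := d) (t := t1) (s := t3)
    hcja hcjb hcjc hcjd ha0 hb0 hc0 hd0 hab hcd hA1 hB1 hC1 hD1 hD3 hVw1
    hw2lt ht1lt ht3lt hk1 hk1' hk3 hk3'
  -- second application: chords cb and ad, polar of w3, distances from w2
  have hB2 : c * d - b * a ≠ 0 := by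
    intro h0; apply h1; linear_combination -h0
  have hC2 : c * a - b * d ≠ 0 := by
    intro h0; apply hC1; linear_combination h0
  have hA2 : c * b - a * d ≠ 0 := by
    intro h0; apply h3; linear_combination -h0
  have heqV : (c * d * (b + a) - b * a * (c + d)) / (c * d - b * a) =
      (a * b * (c + d) - c * d * (a + b)) / (a * b - c * d) := by
    rw [div_eq_div_iff hB2 hA1]; ring
  have heqW : (c * a * (b + d) - b * d * (c + a)) / (c * a - b * d) =
      (a * c * (b + d) - b * d * (a + c)) / (a * c - b * d) := by
    rw [div_eq_div_iff hC2 hC1]; ring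
  have hVw2 : (c * d * (b + a) - b * a * (c + d)) / (c * d - b * a) ≠
      (c * a * (b + d) - b * d * (c + a)) / (c * a - b * d) := by
    intro heq
    rw [div_eq_div_iff hB2 hC2] at heq
    have hz0 : (a - d) * ((b - c) * (a * d * (b + c) - b * c * (a + d))) = 0 := by
      linear_combination -heq
    rcases mul_eq_zero.mp hz0 with hz | hz
    · exact had (sub_eq_zero.mp hz)
    · rcases mul_eq_zero.mp hz with hz2 | hz2
      · exact hbc (sub_eq_zero.mp hz2)
      · exact hw3n hz2
  rw [← heqV, ← heqW] at hk2 hk4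
  have hwlt2 : ‖(c * a * (b + d) - b * d * (c + a)) / (c * a - b * d)‖ < 1 := by
    rw [heqW]; exact hw2lt
  rw [Set.insert_comm] at hk2'
  have case2 := core (x := c) (y := b) (z := a) (u := d) (t := t2) (s := t4)
    hcjc hcjb hcja hcjd hc0 hb0 ha0 hd0 hbc.symm had hA2 hB2 hC2 hD2 hD4 hVw2
    hwlt2 ht2lt ht4lt hk2 hk2' hk4 hk4'
  rw [heqW] at case2
  exact ⟨case1, case2⟩
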